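/- Let A be a unital C*-algebra and let a, b ∈ A be self-adjoint elements which anticommute: a·b = −b·a. Then: (i) (a+b)² = a² + b²; (ii) the positive element d = 1 + a² + b² is invertible, and setting m = (1+a²)·d⁻¹ and n = (1+b²)·d⁻¹ (positive elements which commute with each other and with a², b²), one has m + n = 1 + d⁻¹; (iii) with the bounded transform Q(x) := x·(1+x²)^{−1/2} (defined via the continuous functional calculus, 1+x² being invertible for self-adjoint x), one has Q(a+b) = m^{1/2}·Q(a) + n^{1/2}·Q(b); and (iv) Q(a+b)·Q(a) + Q(a)·Q(a+b) = 2·m^{1/2}·Q(a)². -/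

import Mathlib

section Helpers

variable {A : Type*} [CStarAlgebra A]

lemma commute_cfcHom_of_commute {x y : A} (hy : IsSelfAdjoint y) (h : Commute x y)
    (g : C(spectrum ℝ y, ℝ)) : Commute x (cfcHom hy g) := by
  have hcont : Continuous (cfcHom hy (R := ℝ)) := (cfcHom_isClosedEmbedding hy).continuous
  induction g using ContinuousMap.induction_on_of_compact with
  | const r =>
    have h1 : (ContinuousMap.const (spectrum ℝ y) r) = algebraMap ℝ C(spectrum ℝ y, ℝ) r := rfl
    rw [h1, AlgHomClass.commutes]
    exact (Algebra.commutes r x).symm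
  | id => rw [cfcHom_id hy]; exact h
  | star_id => rw [map_star, cfcHom_id hy, hy.star_eq]; exact h
  | add f g hf hg => rw [map_add]; exact hf.add_right hg
  | mul f g hf hg => rw [map_mul]; exact hf.mul_right hg
  | frequently f hf =>
    have hcl : IsClosed {g : C(spectrum ℝ y, ℝ) | Commute x (cfcHom hy g)} :=
      isClosed_eq ((continuous_mul_left x).comp hcont) ((continuous_mul_right x).comp hcont)
    have : f ∈ closure {g : C(spectrum ℝ y, ℝ) | Commute x (cfcHom hy g)} :=
      mem_closure_iff_frequently.mpr hf
    rwa [hcl.closure_eq] at this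

lemma commute_cfc_of_commute {x y : A} (hy : IsSelfAdjoint y) (h : Commute x y) (f : ℝ → ℝ) :
    Commute x (cfc f y) := by
  by_cases hf : ContinuousOn f (spectrum ℝ y)
  · rw [cfc_apply f y hy hf]
    exact commute_cfcHom_of_commute hy h _
  · rw [cfc_apply_of_not_continuousOn y hf]
    exact Commute.zero_right x

lemma commute_ring_inverse {M₀ : Type*} [MonoidWithZero M₀] {x d : M₀}
    (h : Commute x d) : Commute x (Ring.inverse d) := by
  by_cases hd : IsUnit d
  · obtain ⟨u, rfl⟩ := hd
    rw [Ring.inverse_unit]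
    exact h.units_inv_right
  · rw [Ring.inverse_non_unit _ hd]
    exact Commute.zero_right x

lemma cfc_inv_one_add_sq (x : A) (hx : IsSelfAdjoint x) :
    (1 + x ^ 2) * (cfc (fun t : ℝ => (1 + t ^ 2)⁻¹) x) = 1 ∧
    (cfc (fun t : ℝ => (1 + t ^ 2)⁻¹) x) * (1 + x ^ 2) = 1 := by
  have hc2 : Continuous fun t : ℝ => (1 + t ^ 2)⁻¹ :=
    Continuous.inv₀ (by continuity) fun t => by positivity
  have h1x : cfc (fun t : ℝ => 1 + t ^ 2) x = 1 + x ^ 2 := by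
    rw [cfc_const_add 1 (fun t : ℝ => t ^ 2) x (by fun_prop) hx, map_one, cfc_pow_id x 2 hx]
  constructor
  · rw [← h1x, ← cfc_mul _ _ x (by fun_prop) hc2.continuousOn]
    calc cfc (fun t : ℝ => (1 + t ^ 2) * (1 + t ^ 2)⁻¹) x
        = cfc (fun _ : ℝ => (1 : ℝ)) x := cfc_congr fun t _ => mul_inv_cancel₀ (by positivity)
      _ = 1 := cfc_const_one ℝ x hx
  · rw [← h1x, ← cfc_mul _ _ x hc2.continuousOn (by fun_prop)]
    calc cfc (fun t : ℝ => (1 + t ^ 2)⁻¹ * (1 + t ^ 2)) x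
        = cfc (fun _ : ℝ => (1 : ℝ)) x := cfc_congr fun t _ => inv_mul_cancel₀ (by positivity)
      _ = 1 := cfc_const_one ℝ x hx

lemma one_add_sq_isUnit (x : A) (hx : IsSelfAdjoint x) :
    IsUnit (1 + x ^ 2) ∧
      Ring.inverse (1 + x ^ 2) = cfc (fun t : ℝ => (1 + t ^ 2)⁻¹) x := by
  obtain ⟨h1, h2⟩ := cfc_inv_one_add_sq x hx
  refine ⟨⟨⟨1 + x ^ 2, _, h1, h2⟩, rfl⟩, ?_⟩
  exact Ring.inverse_unit ⟨1 + x ^ 2, _, h1, h2⟩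

lemma cfc_f_sq (x : A) (hx : IsSelfAdjoint x) :
    cfc (fun t : ℝ => (Real.sqrt (1 + t ^ 2))⁻¹) x *
      cfc (fun t : ℝ => (Real.sqrt (1 + t ^ 2))⁻¹) x
      = cfc (fun t : ℝ => (1 + t ^ 2)⁻¹) x := by
  have hc1 : Continuous fun t : ℝ => (Real.sqrt (1 + t ^ 2))⁻¹ := by
    apply Continuous.inv₀
    · exact Real.continuous_sqrt.comp (by continuity)
    · exact fun t => ne_of_gt (Real.sqrt_pos.mpr (by positivity))
  rw [← cfc_mul _ _ x hc1.continuousOn hc1.continuousOn]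
  apply cfc_congr
  intro t _
  show (Real.sqrt (1 + t ^ 2))⁻¹ * (Real.sqrt (1 + t ^ 2))⁻¹ = (1 + t ^ 2)⁻¹
  rw [← mul_inv, Real.mul_self_sqrt (by positivity)]

lemma cfc_f_eq (x : A) (hx : IsSelfAdjoint x) :
    cfc (fun t : ℝ => (Real.sqrt (1 + t ^ 2))⁻¹) x
      = cfc (fun s : ℝ => (Real.sqrt (1 + s))⁻¹) (x ^ 2) := by
  have hg : ContinuousOn (fun s : ℝ => (Real.sqrt (1 + s))⁻¹) ((· ^ 2) '' spectrum ℝ x) := by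
    apply ContinuousOn.inv₀
    · exact (Real.continuous_sqrt.comp (by continuity)).continuousOn
    · rintro s ⟨t, -, rfl⟩
      exact ne_of_gt (Real.sqrt_pos.mpr (by positivity))
  exact cfc_comp_pow (fun s : ℝ => (Real.sqrt (1 + s))⁻¹) 2 x hg hx

variable [PartialOrder A] [StarOrderedRing A]

lemma cfc_sqrt_mul_self {x : A} (hx : 0 ≤ x) : cfc Real.sqrt x * cfc Real.sqrt x = x := by
  rw [← cfc_mul _ _ x Real.continuous_sqrt.continuousOn Real.continuous_sqrt.continuousOn]
  have h : (spectrum ℝ x).EqOn (fun t => Real.sqrt t * Real.sqrt t) id := fun t ht =>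
    Real.mul_self_sqrt (spectrum_nonneg_of_nonneg hx ht)
  rw [cfc_congr h, cfc_id ℝ x (IsSelfAdjoint.of_nonneg hx)]

lemma nonneg_mul_nonneg_of_commute {x y : A} (hx : 0 ≤ x) (hy : 0 ≤ y) (h : Commute x y) :
    0 ≤ x * y := by
  have hr0 : 0 ≤ cfc Real.sqrt x := cfc_nonneg fun t _ => Real.sqrt_nonneg t
  have hrr : cfc Real.sqrt x * cfc Real.sqrt x = x := cfc_sqrt_mul_self hx
  have hyr : Commute y (cfc Real.sqrt x) :=
    commute_cfc_of_commute (IsSelfAdjoint.of_nonneg hx) h.symm _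
  have key : x * y = cfc Real.sqrt x * y * star (cfc Real.sqrt x) := by
    rw [(IsSelfAdjoint.of_nonneg hr0).star_eq, mul_assoc, hyr.eq, ← mul_assoc, hrr]
  rw [key]
  exact star_right_conjugate_nonneg hy _

lemma eq_of_sq_eq_sq' {x y : A} (hx : 0 ≤ x) (hy : 0 ≤ y) (h : x * x = y * y) : x = y := by
  calc x = CFC.sqrt (y * y) := (CFC.sqrt_unique h hx).symm
    _ = y := CFC.sqrt_unique rfl hy

end Helpers

/-- Algebraic identities for the bounded (Woronowicz) transform
`Q(x) = x (1 + x²)^{−1/2}` of anticommuting self-adjoint elements `a, b` of a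
unital C*-algebra: `(a+b)² = a² + b²`; `d = 1 + a² + b²` is positive and
invertible; `m = (1+a²)d⁻¹` and `n = (1+b²)d⁻¹` are positive, commute with
each other and with `a², b²`, and satisfy `m + n = 1 + d⁻¹`;
`Q(a+b) = m^{1/2} Q(a) + n^{1/2} Q(b)`; and
`Q(a+b)Q(a) + Q(a)Q(a+b) = 2 m^{1/2} Q(a)²`. -/
theorem stmt_12
    {A : Type*} [CStarAlgebra A] [PartialOrder A] [StarOrderedRing A]
    (a b : A) (ha : IsSelfAdjoint a) (hb : IsSelfAdjoint b)
    (hab : a * b = -(b * a))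
    (Q : A → A)
    (hQ : ∀ x : A, Q x = x * cfc (fun t : ℝ => (Real.sqrt (1 + t ^ 2))⁻¹) x)
    (m n : A)
    (hm : m = (1 + a ^ 2) * Ring.inverse (1 + a ^ 2 + b ^ 2))
    (hn : n = (1 + b ^ 2) * Ring.inverse (1 + a ^ 2 + b ^ 2)) :
    (a + b) ^ 2 = a ^ 2 + b ^ 2 ∧
    0 ≤ 1 + a ^ 2 + b ^ 2 ∧
    IsUnit (1 + a ^ 2 + b ^ 2) ∧
    0 ≤ m ∧ 0 ≤ n ∧
    Commute m n ∧
    Commute m (a ^ 2) ∧ Commute m (b ^ 2) ∧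
    Commute n (a ^ 2) ∧ Commute n (b ^ 2) ∧
    m + n = 1 + Ring.inverse (1 + a ^ 2 + b ^ 2) ∧
    Q (a + b) = cfc Real.sqrt m * Q a + cfc Real.sqrt n * Q b ∧
    Q (a + b) * Q a + Q a * Q (a + b) = 2 * (cfc Real.sqrt m * Q a ^ 2) := by
  have hba : b * a = -(a * b) := by rw [hab, neg_neg]
  -- basic commutation relations
  have hCba2 : Commute b (a ^ 2) := by
    have h : a ^ 2 * b = b * a ^ 2 := by
      calc a ^ 2 * b = a * (a * b) := by rw [pow_two, mul_assoc]
        _ = a * (-(b * a)) := by rw [hab]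
        _ = -((a * b) * a) := by rw [mul_neg, mul_assoc]
        _ = (b * a) * a := by rw [hab, neg_mul, neg_neg]
        _ = b * a ^ 2 := by rw [pow_two, mul_assoc]
    exact h.symm
  have hCab2 : Commute a (b ^ 2) := by
    have h : b ^ 2 * a = a * b ^ 2 := by
      calc b ^ 2 * a = b * (b * a) := by rw [pow_two, mul_assoc]
        _ = b * (-(a * b)) := by rw [hba]
        _ = -((b * a) * b) := by rw [mul_neg, mul_assoc]
        _ = (a * b) * b := by rw [hba, neg_mul, neg_neg]
        _ = a * b ^ 2 := by rw [pow_two, mul_assoc]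
    exact h.symm
  -- part (i)
  have hsum0 : a * b + b * a = 0 := by rw [hab]; exact neg_add_cancel _
  have hi : (a + b) ^ 2 = a ^ 2 + b ^ 2 := by
    have expand : (a + b) ^ 2 = a ^ 2 + (a * b + b * a) + b ^ 2 := by
      rw [pow_two, pow_two, pow_two, add_mul, mul_add, mul_add]; abel
    rw [expand, hsum0, add_zero]
  -- positivity of d
  have hc_sa : IsSelfAdjoint (a + b) := ha.add hb
  have ha2 : IsSelfAdjoint (a ^ 2) := ha.pow 2
  have hb2 : IsSelfAdjoint (b ^ 2) := hb.pow 2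
  have h0a2 : (0 : A) ≤ a ^ 2 := by
    have h := star_mul_self_nonneg a
    rw [ha.star_eq] at h
    rw [pow_two]; exact h
  have h0b2 : (0 : A) ≤ b ^ 2 := by
    have h := star_mul_self_nonneg b
    rw [hb.star_eq] at h
    rw [pow_two]; exact h
  have h0d : (0 : A) ≤ 1 + a ^ 2 + b ^ 2 :=
    add_nonneg (add_nonneg zero_le_one h0a2) h0b2
  -- invertibility of d
  have hd_eq : 1 + (a + b) ^ 2 = 1 + a ^ 2 + b ^ 2 := by rw [hi, add_assoc]
  obtain ⟨hud', hinv'⟩ := one_add_sq_isUnit (a + b) hc_sa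
  have hud : IsUnit (1 + a ^ 2 + b ^ 2) := hd_eq ▸ hud'
  have hinvd : Ring.inverse (1 + a ^ 2 + b ^ 2)
      = cfc (fun t : ℝ => (1 + t ^ 2)⁻¹) (a + b) := hd_eq ▸ hinv'
  have h0r : (0 : A) ≤ Ring.inverse (1 + a ^ 2 + b ^ 2) := by
    rw [hinvd]; exact cfc_nonneg fun t _ => by positivity
  -- commutation with d and its inverse
  have hCa2b2 : Commute (a ^ 2) (b ^ 2) := hCab2.pow_left 2
  have hCa2d : Commute (a ^ 2) (1 + a ^ 2 + b ^ 2) :=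
    ((Commute.one_right _).add_right (Commute.refl _)).add_right hCa2b2
  have hCb2d : Commute (b ^ 2) (1 + a ^ 2 + b ^ 2) :=
    ((Commute.one_right _).add_right hCa2b2.symm).add_right (Commute.refl _)
  have hCa2r : Commute (a ^ 2) (Ring.inverse (1 + a ^ 2 + b ^ 2)) := commute_ring_inverse hCa2d
  have hCb2r : Commute (b ^ 2) (Ring.inverse (1 + a ^ 2 + b ^ 2)) := commute_ring_inverse hCb2d
  have hC1a2r : Commute (1 + a ^ 2) (Ring.inverse (1 + a ^ 2 + b ^ 2)) :=
    (Commute.one_left _).add_left hCa2r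
  have hC1b2r : Commute (1 + b ^ 2) (Ring.inverse (1 + a ^ 2 + b ^ 2)) :=
    (Commute.one_left _).add_left hCb2r
  -- positivity of m and n
  have h01a2 : (0 : A) ≤ 1 + a ^ 2 := add_nonneg zero_le_one h0a2
  have h01b2 : (0 : A) ≤ 1 + b ^ 2 := add_nonneg zero_le_one h0b2
  have h0m : 0 ≤ m := hm ▸ nonneg_mul_nonneg_of_commute h01a2 h0r hC1a2r
  have h0n : 0 ≤ n := hn ▸ nonneg_mul_nonneg_of_commute h01b2 h0r hC1b2r
  -- commutation of m, n
  have hC1a21b2 : Commute (1 + a ^ 2) (1 + b ^ 2) :=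
    (Commute.one_right _).add_right ((Commute.one_left _).add_left hCa2b2)
  have hCmn : Commute m n := by
    rw [hm, hn]
    exact (hC1a21b2.mul_right hC1a2r).mul_left
      (hC1b2r.symm.mul_right (Commute.refl _))
  have hCma2 : Commute m (a ^ 2) := by
    rw [hm]
    exact ((Commute.one_left _).add_left (Commute.refl _)).mul_left hCa2r.symm
  have hCmb2 : Commute m (b ^ 2) := by
    rw [hm]
    exact ((Commute.one_left _).add_left hCa2b2).mul_left hCb2r.symm
  have hCna2 : Commute n (a ^ 2) := by
    rw [hn]
    exact ((Commute.one_left _).add_left hCa2b2.symm).mul_left hCa2r.symm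
  have hCnb2 : Commute n (b ^ 2) := by
    rw [hn]
    exact ((Commute.one_left _).add_left (Commute.refl _)).mul_left hCb2r.symm
  -- m + n = 1 + d⁻¹
  have hmn_sum : m + n = 1 + Ring.inverse (1 + a ^ 2 + b ^ 2) := by
    rw [hm, hn, ← add_mul,
      show (1 + a ^ 2) + (1 + b ^ 2) = 1 + (1 + a ^ 2 + b ^ 2) by abel,
      add_mul, one_mul, Ring.mul_inverse_cancel _ hud, add_comm]
  -- the bounded transforms
  set sa := cfc (fun t : ℝ => (Real.sqrt (1 + t ^ 2))⁻¹) a with hsa_def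
  set sb := cfc (fun t : ℝ => (Real.sqrt (1 + t ^ 2))⁻¹) b with hsb_def
  set sc := cfc (fun t : ℝ => (Real.sqrt (1 + t ^ 2))⁻¹) (a + b) with hsc_def
  have hsa0 : 0 ≤ sa := cfc_nonneg fun t _ => by positivity
  have hsb0 : 0 ≤ sb := cfc_nonneg fun t _ => by positivity
  have hsc0 : 0 ≤ sc := cfc_nonneg fun t _ => by positivity
  have hsasa : sa * sa = cfc (fun t : ℝ => (1 + t ^ 2)⁻¹) a := cfc_f_sq a ha
  have hsbsb : sb * sb = cfc (fun t : ℝ => (1 + t ^ 2)⁻¹) b := cfc_f_sq b hb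
  have hscsc : sc * sc = Ring.inverse (1 + a ^ 2 + b ^ 2) := by
    rw [hsc_def, cfc_f_sq (a + b) hc_sa, hinvd]
  obtain ⟨hA1, -⟩ := cfc_inv_one_add_sq a ha
  obtain ⟨hB1, -⟩ := cfc_inv_one_add_sq b hb
  have hA1' : (1 + a ^ 2) * (sa * sa) = 1 := by rw [hsasa]; exact hA1
  have hB1' : (1 + b ^ 2) * (sb * sb) = 1 := by rw [hsbsb]; exact hB1
  -- commutation with sa, sb
  have hCa2sa : Commute (a ^ 2) sa :=
    commute_cfc_of_commute ha ((Commute.refl a).pow_left 2) _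
  have hCb2sa : Commute (b ^ 2) sa := commute_cfc_of_commute ha hCab2.symm _
  have hCa2sb : Commute (a ^ 2) sb := commute_cfc_of_commute hb hCba2.symm _
  have hCb2sb : Commute (b ^ 2) sb :=
    commute_cfc_of_commute hb ((Commute.refl b).pow_left 2) _
  have hCdsa : Commute (1 + a ^ 2 + b ^ 2) sa :=
    ((Commute.one_left _).add_left hCa2sa).add_left hCb2sa
  have hCdsb : Commute (1 + a ^ 2 + b ^ 2) sb :=
    ((Commute.one_left _).add_left hCa2sb).add_left hCb2sb
  have hCsar : Commute sa (Ring.inverse (1 + a ^ 2 + b ^ 2)) := commute_ring_inverse hCdsa.symm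
  have hCsbr : Commute sb (Ring.inverse (1 + a ^ 2 + b ^ 2)) := commute_ring_inverse hCdsb.symm
  have hCsam : Commute sa m := by
    rw [hm]
    exact ((Commute.one_right _).add_right hCa2sa.symm).mul_right hCsar
  have hCsbn : Commute sb n := by
    rw [hn]
    exact ((Commute.one_right _).add_right hCb2sb.symm).mul_right hCsbr
  -- square roots of m and n
  have h0sqm : 0 ≤ cfc Real.sqrt m := cfc_nonneg fun t _ => Real.sqrt_nonneg t
  have h0sqn : 0 ≤ cfc Real.sqrt n := cfc_nonneg fun t _ => Real.sqrt_nonneg t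
  have hsqm : cfc Real.sqrt m * cfc Real.sqrt m = m := cfc_sqrt_mul_self h0m
  have hsqn : cfc Real.sqrt n * cfc Real.sqrt n = n := cfc_sqrt_mul_self h0n
  have hCsqm_sa : Commute (cfc Real.sqrt m) sa :=
    (commute_cfc_of_commute (IsSelfAdjoint.of_nonneg h0m) hCsam Real.sqrt).symm
  have hCsqn_sb : Commute (cfc Real.sqrt n) sb :=
    (commute_cfc_of_commute (IsSelfAdjoint.of_nonneg h0n) hCsbn Real.sqrt).symm
  -- the key square identities
  have hsq_m : (cfc Real.sqrt m * sa) * (cfc Real.sqrt m * sa) = sc * sc := by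
    rw [hCsqm_sa.symm.mul_mul_mul_comm, hsqm, hm, mul_assoc,
      (Commute.mul_right hCsar.symm hCsar.symm).eq, ← mul_assoc, hA1', one_mul]
    exact hscsc.symm
  have hsq_n : (cfc Real.sqrt n * sb) * (cfc Real.sqrt n * sb) = sc * sc := by
    rw [hCsqn_sb.symm.mul_mul_mul_comm, hsqn, hn, mul_assoc,
      (Commute.mul_right hCsbr.symm hCsbr.symm).eq, ← mul_assoc, hB1', one_mul]
    exact hscsc.symm
  have hscm : sc = cfc Real.sqrt m * sa :=
    eq_of_sq_eq_sq' hsc0 (nonneg_mul_nonneg_of_commute h0sqm hsa0 hCsqm_sa) hsq_m.symm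
  have hscn : sc = cfc Real.sqrt n * sb :=
    eq_of_sq_eq_sq' hsc0 (nonneg_mul_nonneg_of_commute h0sqn hsb0 hCsqn_sb) hsq_n.symm
  -- a and b commute with √m, √n
  have hCa_a2 : Commute a (a ^ 2) := (Commute.refl a).pow_right 2
  have hCb_b2 : Commute b (b ^ 2) := (Commute.refl b).pow_right 2
  have hCad : Commute a (1 + a ^ 2 + b ^ 2) :=
    ((Commute.one_right a).add_right hCa_a2).add_right hCab2
  have hCbd : Commute b (1 + a ^ 2 + b ^ 2) :=
    ((Commute.one_right b).add_right hCba2).add_right hCb_b2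
  have hCar : Commute a (Ring.inverse (1 + a ^ 2 + b ^ 2)) := commute_ring_inverse hCad
  have hCbr : Commute b (Ring.inverse (1 + a ^ 2 + b ^ 2)) := commute_ring_inverse hCbd
  have hCam : Commute a m := by
    rw [hm]; exact ((Commute.one_right a).add_right hCa_a2).mul_right hCar
  have hCbn : Commute b n := by
    rw [hn]; exact ((Commute.one_right b).add_right hCb_b2).mul_right hCbr
  have hCa_sqm : Commute a (cfc Real.sqrt m) :=
    commute_cfc_of_commute (IsSelfAdjoint.of_nonneg h0m) hCam Real.sqrt
  have hCb_sqn : Commute b (cfc Real.sqrt n) :=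
    commute_cfc_of_commute (IsSelfAdjoint.of_nonneg h0n) hCbn Real.sqrt
  -- part (iii)
  have hiii : Q (a + b) = cfc Real.sqrt m * Q a + cfc Real.sqrt n * Q b := by
    rw [hQ (a + b), hQ a, hQ b, ← hsa_def, ← hsb_def, ← hsc_def, add_mul]
    congr 1
    · rw [hscm, ← mul_assoc, hCa_sqm.eq, mul_assoc]
    · rw [hscn, ← mul_assoc, hCb_sqn.eq, mul_assoc]
  -- anticommutation of Q a and Q b
  have hCb_sa : Commute b sa := by
    rw [hsa_def, cfc_f_eq a ha]
    exact commute_cfc_of_commute ha2 hCba2 _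
  have hCa_sb : Commute a sb := by
    rw [hsb_def, cfc_f_eq b hb]
    exact commute_cfc_of_commute hb2 hCab2 _
  have hCsa_sb : Commute sa sb := by
    rw [hsa_def, cfc_f_eq a ha]
    exact (commute_cfc_of_commute ha2 hCa2sb.symm _).symm
  have hanti : Q b * Q a + Q a * Q b = 0 := by
    rw [hQ a, hQ b, ← hsa_def, ← hsb_def]
    have e1 : b * sb * (a * sa) = b * a * (sb * sa) :=
      Commute.mul_mul_mul_comm hCa_sb.symm b sa
    have e2 : a * sa * (b * sb) = a * b * (sa * sb) :=
      Commute.mul_mul_mul_comm hCb_sa.symm a sb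
    rw [e1, e2, hab, hCsa_sb.eq, neg_mul, add_neg_cancel]
  -- commutation of Q a with √m and √n
  have hCsan : Commute sa n := by
    rw [hn]
    exact ((Commute.one_right _).add_right hCb2sa.symm).mul_right hCsar
  have hCsa_sqn : Commute sa (cfc Real.sqrt n) :=
    commute_cfc_of_commute (IsSelfAdjoint.of_nonneg h0n) hCsan Real.sqrt
  have hCan : Commute a n := by
    rw [hn]; exact ((Commute.one_right a).add_right hCab2).mul_right hCar
  have hCa_sqn : Commute a (cfc Real.sqrt n) :=
    commute_cfc_of_commute (IsSelfAdjoint.of_nonneg h0n) hCan Real.sqrt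
  have hCQa_sqm : Commute (Q a) (cfc Real.sqrt m) := by
    rw [hQ a, ← hsa_def]
    exact hCa_sqm.mul_left hCsqm_sa.symm
  have hCQa_sqn : Commute (Q a) (cfc Real.sqrt n) := by
    rw [hQ a, ← hsa_def]
    exact hCa_sqn.mul_left hCsa_sqn
  -- part (iv)
  have hiv : Q (a + b) * Q a + Q a * Q (a + b) = 2 * (cfc Real.sqrt m * Q a ^ 2) := by
    rw [hiii]
    have h1 : Q a * (cfc Real.sqrt m * Q a) = cfc Real.sqrt m * (Q a * Q a) := by
      rw [← mul_assoc, hCQa_sqm.eq, mul_assoc]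
    have h2 : Q a * (cfc Real.sqrt n * Q b) = cfc Real.sqrt n * (Q a * Q b) := by
      rw [← mul_assoc, hCQa_sqn.eq, mul_assoc]
    calc (cfc Real.sqrt m * Q a + cfc Real.sqrt n * Q b) * Q a
          + Q a * (cfc Real.sqrt m * Q a + cfc Real.sqrt n * Q b)
        = cfc Real.sqrt m * (Q a * Q a) + cfc Real.sqrt m * (Q a * Q a)
          + (cfc Real.sqrt n * (Q b * Q a) + cfc Real.sqrt n * (Q a * Q b)) := by
          rw [add_mul, mul_add, h1, h2]
          simp only [mul_assoc]
          abel
      _ = 2 * (cfc Real.sqrt m * Q a ^ 2) := by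
          rw [← mul_add (cfc Real.sqrt n), hanti, mul_zero, add_zero, pow_two, two_mul]
  exact ⟨hi, h0d, hud, h0m, h0n, hCmn, hCma2, hCmb2, hCna2, hCnb2, hmn_sum, hiii, hiv⟩
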